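/- Let S_α ∈ k, T_α ∈ p, λ ∈ a satisfy [H,S_α] = ⟨λ,H⟩T_α, [H,T_α] = -⟨λ,H⟩S_α for all H ∈ a, [S_α,T_α] = λ, with |S_α| = |T_α| = 1. Then for X ∈ a and t ∈ ℝ, Ad(exp tS_α)X = X + (⟨λ,X⟩/|λ|²)(cos(t|λ|) - 1)λ - (⟨λ,X⟩/|λ|) sin(t|λ|) T_α. -/

import Mathlib

open scoped RealInnerProductSpace

/-- Let `g` be a compact semisimple Lie algebra with `Ad`-invariant inner
product, `g = k ⊕ p` a canonical decomposition for an involution `θ`, `a` a maximal abelian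
subspace of `p`, and let `S_α ∈ k`, `T_α ∈ p`, `λ ∈ a` satisfy `[H,S_α] = ⟪λ,H⟫ T_α`,
`[H,T_α] = -⟪λ,H⟫ S_α` for all `H ∈ a`, `[S_α,T_α] = λ`, with `‖S_α‖ = ‖T_α‖ = 1`.
Then for `X ∈ a` and `t ∈ ℝ`, `Ad(exp tS_α)X` — the time-`t` value of the solution of the
ODE `Y' = [S_α, Y]`, `Y 0 = X` — equals
`X + (⟪λ,X⟫/‖λ‖²)(cos(t‖λ‖) - 1) λ - (⟪λ,X⟫/‖λ‖) sin(t‖λ‖) T_α`. -/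
theorem stmt10
    (g : Type*) [NormedAddCommGroup g] [InnerProductSpace ℝ g] [FiniteDimensional ℝ g]
    (l : g →ₗ[ℝ] g →ₗ[ℝ] g)
    (hl_alt : ∀ X : g, l X X = 0)
    (hl_jacobi : ∀ X Y Z : g, l X (l Y Z) = l (l X Y) Z + l Y (l X Z))
    (hinner : ∀ Z X Y : g, ⟪l Z X, Y⟫ = -⟪X, l Z Y⟫)
    (θ : g →ₗ[ℝ] g)
    (hθinv : ∀ X : g, θ (θ X) = X)
    (hθaut : ∀ X Y : g, θ (l X Y) = l (θ X) (θ Y))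
    (a : Submodule ℝ g)
    (hap : ∀ v ∈ a, θ v = -v)
    (habelian : ∀ u ∈ a, ∀ v ∈ a, l u v = 0)
    (hamax : ∀ v : g, θ v = -v → (∀ u ∈ a, l u v = 0) → v ∈ a)
    (Sα Tα lam : g)
    (hSk : θ Sα = Sα) (hTp : θ Tα = -Tα) (hlam : lam ∈ a) (hlam0 : lam ≠ 0)
    (hS : ∀ H ∈ a, l H Sα = ⟪lam, H⟫ • Tα)
    (hT : ∀ H ∈ a, l H Tα = -⟪lam, H⟫ • Sα)
    (hST : l Sα Tα = lam)
    (hSnorm : ‖Sα‖ = 1) (hTnorm : ‖Tα‖ = 1)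
    (X : g) (hX : X ∈ a) (t : ℝ)
    (Y : ℝ → g)
    (hY : ∀ s : ℝ, HasDerivAt Y (l Sα (Y s)) s)
    (hY0 : Y 0 = X) :
    Y t = X + ((⟪lam, X⟫ / ‖lam‖ ^ 2) * (Real.cos (t * ‖lam‖) - 1)) • lam
            - ((⟪lam, X⟫ / ‖lam‖) * Real.sin (t * ‖lam‖)) • Tα := by
  
  classical
  -- abbreviations
  set n : ℝ := ‖lam‖ with hn
  have hnpos : 0 < n := norm_pos_iff.mpr hlam0
  have hn0 : n ≠ 0 := ne_of_gt hnpos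
  -- antisymmetry of the bracket
  have hanti : ∀ A B : g, l A B = - l B A := by
    intro A B
    have h := hl_alt (A + B)
    simp only [map_add, LinearMap.add_apply, hl_alt A, hl_alt B, zero_add, add_zero] at h
    exact eq_neg_of_add_eq_zero_right h
  -- key bracket computations
  have hSX : l Sα X = (-⟪lam, X⟫) • Tα := by
    rw [hanti Sα X, hS X hX]; module
  have hSlam : l Sα lam = (-(n ^ 2)) • Tα := by
    rw [hanti Sα lam, hS lam hlam, real_inner_self_eq_norm_sq]; module
  -- the candidate solution
  set c : ℝ := ⟪lam, X⟫ / n ^ 2 with hc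
  set d : ℝ := ⟪lam, X⟫ / n with hd
  set Z : ℝ → g := fun s => X + (c * (Real.cos (s * n) - 1)) • lam
      - (d * Real.sin (s * n)) • Tα with hZ
  have hZ0 : Z 0 = X := by simp [hZ]
  have hZderiv : ∀ s : ℝ, HasDerivAt Z (l Sα (Z s)) s := by
    intro s
    have hcos : HasDerivAt (fun s : ℝ => Real.cos (s * n)) (-Real.sin (s * n) * n) s := by
      simpa [Function.comp_def] using (Real.hasDerivAt_cos (s * n)).comp s ((hasDerivAt_id s).mul_const n)
    have hsin : HasDerivAt (fun s : ℝ => Real.sin (s * n)) (Real.cos (s * n) * n) s := by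
      simpa [Function.comp_def] using (Real.hasDerivAt_sin (s * n)).comp s ((hasDerivAt_id s).mul_const n)
    have h1 : HasDerivAt (fun s : ℝ => (c * (Real.cos (s * n) - 1)) • lam)
        ((c * (-Real.sin (s * n) * n)) • lam) s := by
      have := ((hcos.sub_const 1).const_mul c).smul_const lam
      simpa using this
    have h2 : HasDerivAt (fun s : ℝ => (d * Real.sin (s * n)) • Tα)
        ((d * (Real.cos (s * n) * n)) • Tα) s := by
      have := (hsin.const_mul d).smul_const Tα
      simpa using this
    have hD : HasDerivAt Z
        ((c * (-Real.sin (s * n) * n)) • lam - (d * (Real.cos (s * n) * n)) • Tα) s := by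
      simpa [hZ, Pi.add_def, Pi.sub_def] using ((hasDerivAt_const s X).add h1).sub h2
    convert hD using 1
    have hexp : l Sα (Z s) = (-⟪lam, X⟫) • Tα
        + (c * (Real.cos (s * n) - 1)) • ((-(n ^ 2)) • Tα)
        - (d * Real.sin (s * n)) • lam := by
      simp only [hZ, map_add, map_sub, map_smul, hSX, hSlam, hST]
    rw [hexp]
    have e1 : c * (-Real.sin (s * n) * n) = -(d * Real.sin (s * n)) := by
      rw [hc, hd]; field_simp
    have e2 : -⟪lam, X⟫ + c * (Real.cos (s * n) - 1) * (-(n ^ 2))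
        = -(d * (Real.cos (s * n) * n)) := by
      rw [hc, hd]; field_simp; ring
    rw [smul_smul]
    rw [e1]
    have : (-⟪lam, X⟫) • Tα + (c * (Real.cos (s * n) - 1) * -n ^ 2) • Tα
        = (-(d * (Real.cos (s * n) * n))) • Tα := by
      rw [← add_smul, e2]
    rw [this]; module
  -- uniqueness of ODE solutions
  set L := LinearMap.toContinuousLinearMap (l Sα) with hL
  have hv : ∀ s : ℝ, LipschitzOnWith ‖L‖₊ (fun x : g => l Sα x) Set.univ := by
    intro s
    exact (L.lipschitz).lipschitzOnWith
  have hmem : t ∈ Set.Icc (-(|t| + 1)) (|t| + 1) := by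
    constructor <;> [linarith [neg_abs_le t, abs_nonneg t]; linarith [le_abs_self t]]
  have h0 : (0 : ℝ) ∈ Set.Ioo (-(|t| + 1)) (|t| + 1) := by
    constructor <;> [linarith [abs_nonneg t]; linarith [abs_nonneg t]]
  have hYcont : ContinuousOn Y (Set.Icc (-(|t| + 1)) (|t| + 1)) :=
    (fun s _ => ((hY s).continuousAt).continuousWithinAt)
  have hZcont : ContinuousOn Z (Set.Icc (-(|t| + 1)) (|t| + 1)) :=
    (fun s _ => ((hZderiv s).continuousAt).continuousWithinAt)
  have key : Set.EqOn Y Z (Set.Icc (-(|t| + 1)) (|t| + 1)) := by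
    apply ODE_solution_unique_of_mem_Icc (v := fun _ x => l Sα x) (s := fun _ => Set.univ)
      (fun s _ => hv s) h0 hYcont (fun s _ => hY s) (fun _ _ => Set.mem_univ _)
      hZcont (fun s _ => hZderiv s) (fun _ _ => Set.mem_univ _)
    rw [hY0, hZ0]
  have := key hmem
  rw [this]
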